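/- For all nonnegative integers m₁ and m₂ and every real y > 0, ∑_{k=0}^{m₁} binom(m₂+m₁-k, m₂) * binom((m₂+m₁)/2, k) * (-1)^k * (1-y)^k = y^{m₁} * ∑_{k=0}^{m₁} binom(m₂+m₁-k, m₂) * binom((m₂+m₁)/2, k) * (1-y)^k * y^{-k}. -/

import Mathlib

open Finset Polynomial

/-- Generalized binomial coefficient `x(x-1)⋯(x-k+1)/k!` with real upper argument. -/
noncomputable def gchoose (x : ℝ) (k : ℕ) : ℝ :=
  (∏ i ∈ Finset.range k, (x - i)) / (Nat.factorial k)

lemma descPoch_eval (x : ℝ) (k : ℕ) :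
    (descPochhammer ℝ k).eval x = ∏ i ∈ Finset.range k, (x - i) := by
  induction k with
  | zero => simp
  | succ k ih => rw [descPochhammer_succ_eval, ih, Finset.prod_range_succ]

lemma gchoose_eq (x : ℝ) (k : ℕ) : gchoose x k = Ring.choose x k := by
  have h2 : (descPochhammer ℤ k).smeval x = (descPochhammer ℝ k).eval x := by
    rw [descPochhammer_smeval_eq_ascPochhammer, ascPochhammer_smeval_eq_eval,
      ← descPochhammer_eval_eq_ascPochhammer]
  have h := Ring.descPochhammer_eq_factorial_smul_choose x k
  rw [h2, descPoch_eval, nsmul_eq_mul] at h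
  rw [gchoose, h]
  field_simp

lemma gchoose_natCast (n k : ℕ) : gchoose (n : ℝ) k = (n.choose k : ℝ) := by
  rw [gchoose_eq, Ring.choose_natCast]

lemma gchoose_vandermonde (x y : ℝ) (M : ℕ) :
    ∑ t ∈ Finset.range (M + 1), gchoose x t * gchoose y (M - t) = gchoose (x + y) M := by
  simp_rw [gchoose_eq]
  rw [Ring.add_choose_eq M (Commute.all x y),
    Finset.Nat.sum_antidiagonal_eq_sum_range_succ_mk]

lemma gchoose_absorb (x : ℝ) (j t : ℕ) :
    gchoose x (j + t) * ((j + t).choose j : ℝ) = gchoose x j * gchoose (x - j) t := by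
  have h := Ring.choose_smul_choose x (n := j + t) (k := j) (Nat.le_add_right j t)
  rw [nsmul_eq_mul, Nat.add_sub_cancel_left] at h
  rw [gchoose_eq, gchoose_eq, gchoose_eq, mul_comm, h]

lemma gchoose_neg (x : ℝ) (k : ℕ) :
    gchoose x k = (-1) ^ k * gchoose ((k : ℝ) - 1 - x) k := by
  unfold gchoose
  have h : ∏ i ∈ Finset.range k, ((k : ℝ) - 1 - x - i)
      = ∏ i ∈ Finset.range k, ((i : ℝ) - x) := by
    rw [← Finset.prod_range_reflect]
    refine Finset.prod_congr rfl fun i hi => ?_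
    rw [Finset.mem_range] at hi
    have : ((k - 1 - i : ℕ) : ℝ) = (k : ℝ) - 1 - i := by
      have h1 : (1 : ℕ) + i ≤ k := by omega
      push_cast [Nat.sub_sub, Nat.cast_sub h1]
      ring
    rw [this]; ring
  have h2 : ∏ i ∈ Finset.range k, ((i : ℝ) - x)
      = (-1) ^ k * ∏ i ∈ Finset.range k, (x - i) := by
    calc ∏ i ∈ Finset.range k, ((i : ℝ) - x)
        = ∏ i ∈ Finset.range k, (-1 * (x - i)) := Finset.prod_congr rfl fun i _ => by ring
      _ = (∏ _i ∈ Finset.range k, (-1 : ℝ)) * ∏ i ∈ Finset.range k, (x - i) :=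
          Finset.prod_mul_distrib
      _ = (-1) ^ k * ∏ i ∈ Finset.range k, (x - i) := by rw [Finset.prod_const, Finset.card_range]
  rw [h, h2]
  have hsq : (-1 : ℝ) ^ k * (-1) ^ k = 1 := by
    rw [← pow_add, ← two_mul, pow_mul]; norm_num
  linear_combination (-(∏ i ∈ Finset.range k, (x - (i : ℝ))) / (k.factorial : ℝ)) * hsq

lemma key (m₁ m₂ : ℕ) (s : ℝ) (hs : s + s = (m₁ : ℝ) + m₂) (j : ℕ) (hj : j ≤ m₁) :
    ∑ k ∈ Finset.range (m₁ + 1),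
      (-1 : ℝ) ^ k * (((m₂ + m₁ - k).choose m₂ : ℝ) * gchoose s k) * (k.choose j : ℝ)
      = (-1) ^ j * (gchoose s j * gchoose s (m₁ - j)) := by
  have hsplit : m₁ + 1 = j + (m₁ - j + 1) := by omega
  rw [hsplit, Finset.sum_range_add]
  have hzero : ∑ k ∈ Finset.range j,
      (-1 : ℝ) ^ k * (((m₂ + m₁ - k).choose m₂ : ℝ) * gchoose s k) * (k.choose j : ℝ) = 0 := by
    refine Finset.sum_eq_zero fun k hk => ?_
    rw [Finset.mem_range] at hk
    rw [Nat.choose_eq_zero_of_lt hk]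
    simp
  rw [hzero, zero_add]
  have hstep : ∑ t ∈ Finset.range (m₁ - j + 1),
      (-1 : ℝ) ^ (j + t) * (((m₂ + m₁ - (j + t)).choose m₂ : ℝ) * gchoose s (j + t))
        * ((j + t).choose j : ℝ)
      = ∑ t ∈ Finset.range (m₁ - j + 1),
        (-1 : ℝ) ^ m₁ * (gchoose s j *
          (gchoose (s - j) t * gchoose (-(m₂ : ℝ) - 1) (m₁ - j - t))) := by
    refine Finset.sum_congr rfl fun t ht => ?_
    rw [Finset.mem_range] at ht
    have hN : m₂ + m₁ - (j + t) = m₂ + (m₁ - j - t) := by omega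
    have h1 : ((m₂ + (m₁ - j - t)).choose m₂ : ℝ)
        = gchoose ((m₂ + (m₁ - j - t) : ℕ) : ℝ) (m₁ - j - t) := by
      rw [gchoose_natCast]
      congr 1
      have := Nat.choose_symm (Nat.le_add_right m₂ (m₁ - j - t)) (n := m₂ + (m₁ - j - t))
      rw [Nat.add_sub_cancel_left] at this
      exact this.symm
    have h2 : gchoose ((m₂ + (m₁ - j - t) : ℕ) : ℝ) (m₁ - j - t)
        = (-1) ^ (m₁ - j - t) * gchoose (-(m₂ : ℝ) - 1) (m₁ - j - t) := by
      rw [gchoose_neg (((m₂ + (m₁ - j - t) : ℕ)) : ℝ) (m₁ - j - t)]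
      congr 2
      push_cast
      ring
    have h3 : gchoose s (j + t) * ((j + t).choose j : ℝ)
        = gchoose s j * gchoose (s - j) t := gchoose_absorb s j t
    have hsgn : (-1 : ℝ) ^ (j + t) * (-1) ^ (m₁ - j - t) = (-1) ^ m₁ := by
      rw [← pow_add]
      congr 1
      omega
    rw [hN, h1, h2]
    linear_combination ((-1 : ℝ) ^ (j + t) * (-1) ^ (m₁ - j - t)
        * gchoose (-(m₂ : ℝ) - 1) (m₁ - j - t)) * h3
      + (gchoose (-(m₂ : ℝ) - 1) (m₁ - j - t) * (gchoose s j * gchoose (s - j) t)) * hsgn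
  rw [hstep, ← Finset.mul_sum, ← Finset.mul_sum, gchoose_vandermonde (s - j) (-(m₂ : ℝ) - 1) (m₁ - j)]
  have harg : ((m₁ - j : ℕ) : ℝ) - 1 - (s - j + (-(m₂ : ℝ) - 1)) = s := by
    rw [Nat.cast_sub hj]
    linarith [hs]
  rw [gchoose_neg (s - (j : ℝ) + (-(m₂ : ℝ) - 1)) (m₁ - j), harg]
  have hsgn2 : (-1 : ℝ) ^ m₁ * (-1) ^ (m₁ - j) = (-1) ^ j := by
    rw [← pow_add]
    have h2 : m₁ + (m₁ - j) = j + 2 * (m₁ - j) := by omega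
    rw [h2, pow_add, pow_mul]
    norm_num
  linear_combination (gchoose s j * gchoose s (m₁ - j)) * hsgn2

theorem stmt1 (m₁ m₂ : ℕ) (y : ℝ) (hy : 0 < y) :
    ∑ k ∈ Finset.range (m₁ + 1),
        ((m₂ + m₁ - k).choose m₂ : ℝ) * gchoose ((m₂ + m₁ : ℝ) / 2) k * (-1) ^ k * (1 - y) ^ k
      = y ^ m₁ * ∑ k ∈ Finset.range (m₁ + 1),
          ((m₂ + m₁ - k).choose m₂ : ℝ) * gchoose ((m₂ + m₁ : ℝ) / 2) k * (1 - y) ^ k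
            * y ^ (-(k : ℤ)) := by
  have hy' : y ≠ 0 := ne_of_gt hy
  set s : ℝ := ((m₂ : ℝ) + m₁) / 2 with hs_def
  have hs : s + s = (m₁ : ℝ) + m₂ := by rw [hs_def]; ring
  -- abbreviation for coefficients
  set a : ℕ → ℝ := fun k => ((m₂ + m₁ - k).choose m₂ : ℝ) * gchoose s k with ha
  -- LHS computation
  have hL : ∑ k ∈ Finset.range (m₁ + 1), a k * (-1 : ℝ) ^ k * (1 - y) ^ k
      = ∑ i ∈ Finset.range (m₁ + 1), y ^ i * (gchoose s i * gchoose s (m₁ - i)) := by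
    have step1 : ∀ k ∈ Finset.range (m₁ + 1),
        a k * (-1 : ℝ) ^ k * (1 - y) ^ k
        = ∑ i ∈ Finset.range (m₁ + 1), a k * (y ^ i * (-1 : ℝ) ^ (k - i) * (k.choose i : ℝ)) := by
      intro k hk
      rw [Finset.mem_range] at hk
      have hpow : (-1 : ℝ) ^ k * (1 - y) ^ k = (y + (-1)) ^ k := by
        rw [← mul_pow]; congr 1; ring
      rw [mul_assoc, hpow, add_pow, Finset.mul_sum]
      refine (Finset.sum_subset (Finset.range_subset_range.mpr (by omega)) fun i _ hi => ?_)
      rw [Finset.mem_range, not_lt] at hi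
      rw [Nat.choose_eq_zero_of_lt (by omega)]
      simp
    rw [Finset.sum_congr rfl step1, Finset.sum_comm]
    refine Finset.sum_congr rfl fun i hi => ?_
    rw [Finset.mem_range] at hi
    have step2 : ∀ k ∈ Finset.range (m₁ + 1),
        a k * (y ^ i * (-1 : ℝ) ^ (k - i) * (k.choose i : ℝ))
        = y ^ i * (-1 : ℝ) ^ i * ((-1 : ℝ) ^ k * a k * (k.choose i : ℝ)) := by
      intro k _
      by_cases hik : i ≤ k
      · have : (-1 : ℝ) ^ (k - i) = (-1) ^ k * (-1) ^ i := by
          have h1 : (-1 : ℝ) ^ (k - i) * (-1) ^ i = (-1) ^ k := by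
            rw [← pow_add]; congr 1; omega
          have h2 : (-1 : ℝ) ^ i * (-1) ^ i = 1 := by
            rw [← pow_add, ← two_mul, pow_mul]; norm_num
          calc (-1 : ℝ) ^ (k - i) = (-1 : ℝ) ^ (k - i) * ((-1) ^ i * (-1) ^ i) := by rw [h2, mul_one]
            _ = (-1) ^ k * (-1) ^ i := by rw [← mul_assoc, h1]
        rw [this]; ring
      · rw [Nat.choose_eq_zero_of_lt (by omega)]
        simp
    rw [Finset.sum_congr rfl step2, ← Finset.mul_sum]
    have hk := key m₁ m₂ s hs i (by omega)
    simp only [ha] at hk ⊢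
    rw [hk]
    have h2 : (-1 : ℝ) ^ i * ((-1 : ℝ) ^ i * (gchoose s i * gchoose s (m₁ - i)))
        = gchoose s i * gchoose s (m₁ - i) := by
      rw [← mul_assoc, ← pow_add, ← two_mul, pow_mul]; norm_num
    rw [mul_assoc, h2]
  -- RHS computation
  have hR : y ^ m₁ * ∑ k ∈ Finset.range (m₁ + 1), a k * (1 - y) ^ k * y ^ (-(k : ℤ))
      = ∑ i ∈ Finset.range (m₁ + 1), y ^ (m₁ - i) * (gchoose s i * gchoose s (m₁ - i)) := by
    rw [Finset.mul_sum]
    have step1 : ∀ k ∈ Finset.range (m₁ + 1),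
        y ^ m₁ * (a k * (1 - y) ^ k * y ^ (-(k : ℤ)))
        = ∑ i ∈ Finset.range (m₁ + 1),
            a k * ((-1 : ℝ) ^ (k - i) * y ^ (m₁ - i) * (k.choose i : ℝ)) := by
      intro k hk
      rw [Finset.mem_range] at hk
      have hzp : y ^ (-(k : ℤ)) = (y ^ k)⁻¹ := by
        rw [zpow_neg, zpow_natCast]
      have hmk : y ^ m₁ * (y ^ k)⁻¹ = y ^ (m₁ - k) := by
        rw [pow_sub₀ y hy' (by omega : k ≤ m₁)]
      have expand : y ^ m₁ * (a k * (1 - y) ^ k * y ^ (-(k : ℤ)))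
          = y ^ (m₁ - k) * a k * (1 + (-y)) ^ k := by
        rw [hzp, ← hmk]; ring
      rw [expand, add_pow, Finset.mul_sum]
      refine (Finset.sum_subset (Finset.range_subset_range.mpr (by omega)) fun i _ hi => ?_).trans
        (Finset.sum_congr rfl fun i hi => ?_)
      · rw [Finset.mem_range, not_lt] at hi
        rw [Nat.choose_eq_zero_of_lt (by omega)]
        simp
      · rw [Finset.mem_range] at hi
        by_cases hik : i ≤ k
        · have hny : (-y : ℝ) ^ (k - i) = (-1) ^ (k - i) * y ^ (k - i) := by
            rw [← mul_pow]; congr 1; ring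
          have hyy : y ^ (m₁ - k) * y ^ (k - i) = y ^ (m₁ - i) := by
            rw [← pow_add]; congr 1; omega
          rw [hny, one_pow]
          linear_combination (a k * (-1 : ℝ) ^ (k - i) * (k.choose i : ℝ)) * hyy
        · rw [Nat.choose_eq_zero_of_lt (by omega)]
          simp
    rw [Finset.sum_congr rfl step1, Finset.sum_comm]
    refine Finset.sum_congr rfl fun i hi => ?_
    rw [Finset.mem_range] at hi
    have step2 : ∀ k ∈ Finset.range (m₁ + 1),
        a k * ((-1 : ℝ) ^ (k - i) * y ^ (m₁ - i) * (k.choose i : ℝ))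
        = y ^ (m₁ - i) * (-1 : ℝ) ^ i * ((-1 : ℝ) ^ k * a k * (k.choose i : ℝ)) := by
      intro k _
      by_cases hik : i ≤ k
      · have : (-1 : ℝ) ^ (k - i) = (-1) ^ k * (-1) ^ i := by
          have h1 : (-1 : ℝ) ^ (k - i) * (-1) ^ i = (-1) ^ k := by
            rw [← pow_add]; congr 1; omega
          have h2 : (-1 : ℝ) ^ i * (-1) ^ i = 1 := by
            rw [← pow_add, ← two_mul, pow_mul]; norm_num
          calc (-1 : ℝ) ^ (k - i) = (-1 : ℝ) ^ (k - i) * ((-1) ^ i * (-1) ^ i) := by rw [h2, mul_one]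
            _ = (-1) ^ k * (-1) ^ i := by rw [← mul_assoc, h1]
        rw [this]; ring
      · rw [Nat.choose_eq_zero_of_lt (by omega)]
        simp
    rw [Finset.sum_congr rfl step2, ← Finset.mul_sum]
    have hk := key m₁ m₂ s hs i (by omega)
    simp only [ha] at hk ⊢
    rw [hk]
    have h2 : (-1 : ℝ) ^ i * ((-1 : ℝ) ^ i * (gchoose s i * gchoose s (m₁ - i)))
        = gchoose s i * gchoose s (m₁ - i) := by
      rw [← mul_assoc, ← pow_add, ← two_mul, pow_mul]; norm_num
    rw [mul_assoc, h2]
  -- reflection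
  have hrefl : ∑ i ∈ Finset.range (m₁ + 1), y ^ i * (gchoose s i * gchoose s (m₁ - i))
      = ∑ i ∈ Finset.range (m₁ + 1), y ^ (m₁ - i) * (gchoose s i * gchoose s (m₁ - i)) := by
    rw [← Finset.sum_range_reflect
      (fun i => y ^ (m₁ - i) * (gchoose s i * gchoose s (m₁ - i))) (m₁ + 1)]
    refine Finset.sum_congr rfl fun i hi => ?_
    rw [Finset.mem_range] at hi
    have e1 : m₁ + 1 - 1 - i = m₁ - i := by omega
    have e2 : m₁ - (m₁ - i) = i := by omega
    rw [e1, e2]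
    ring
  have hgoal : (∑ k ∈ Finset.range (m₁ + 1),
        ((m₂ + m₁ - k).choose m₂ : ℝ) * gchoose ((m₂ + m₁ : ℝ) / 2) k * (-1) ^ k * (1 - y) ^ k)
      = ∑ k ∈ Finset.range (m₁ + 1), a k * (-1 : ℝ) ^ k * (1 - y) ^ k := by
    refine Finset.sum_congr rfl fun k _ => ?_
    simp only [ha, hs_def]
  have hgoal2 : (y ^ m₁ * ∑ k ∈ Finset.range (m₁ + 1),
        ((m₂ + m₁ - k).choose m₂ : ℝ) * gchoose ((m₂ + m₁ : ℝ) / 2) k * (1 - y) ^ k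
          * y ^ (-(k : ℤ)))
      = y ^ m₁ * ∑ k ∈ Finset.range (m₁ + 1), a k * (1 - y) ^ k * y ^ (-(k : ℤ)) := by
    congr 1
  rw [hgoal, hgoal2, hL, hR, hrefl]
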